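/- Let H be an r-uniform hypergraph with the property that for every longest Berge path of H, every edge of H containing a terminal vertex of that path is a defining edge of that path. Let P = v0, e1, v1, e2, v2, …, v_{k−1}, e_k, v_k be a longest Berge path and W = {v1, v2, …, v_k}. If v_j ∈ e1 ∩ W and (e_i ∩ e_j) \ W ≠ ∅ for some 1 ≤ i < j ≤ k, then every edge of H containing v_i is one of the defining edges e1,…,e_k of P. -/
import Mathlib


/-- A Berge path of length `k` in a hypergraph with edge set `E`: an alternating
sequence of `k+1` distinct vertices `v 0, …, v k` and `k` distinct edges
`e 0, …, e (k-1)` of `E` with `v i, v (i+1) ∈ e i` for each `i`. -/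
def IsBergePath {V : Type*} [DecidableEq V] (E : Finset (Finset V)) (k : ℕ)
    (v : Fin (k + 1) → V) (e : Fin k → Finset V) : Prop :=
  Function.Injective v ∧ Function.Injective e ∧
    (∀ i, e i ∈ E) ∧ ∀ i : Fin k, v i.castSucc ∈ e i ∧ v i.succ ∈ e i

/-- Lemma 6(iv): in the same setting, if `v_j ∈ e_1 ∩ W` and
`(e_i ∩ e_j) \ W ≠ ∅` for some `1 ≤ i < j ≤ k` (indices `i j : Fin k` encode the
paper's indices `i+1 < j+1`, so paper `v_i = vv i.succ`), then every edge of `H`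
containing `v_i` is a defining edge of `P`. -/
theorem stmt15 {V : Type*} [Fintype V] [DecidableEq V]
    (r k : ℕ) (hk : 0 < k)
    (E : Finset (Finset V)) (hunif : ∀ e ∈ E, e.card = r)
    (hmax : ∀ (m : ℕ) (v : Fin (m + 1) → V) (e : Fin m → Finset V),
      IsBergePath E m v e → m ≤ k)
    (hterm : ∀ (v : Fin (k + 1) → V) (e : Fin k → Finset V), IsBergePath E k v e →
      ∀ h ∈ E, (v 0 ∈ h ∨ v (Fin.last k) ∈ h) → ∃ i, e i = h)
    (vv : Fin (k + 1) → V) (ee : Fin k → Finset V)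
    (hP : IsBergePath E k vv ee)
    (W : Finset V) (hW : W = Finset.image (fun i : Fin k => vv i.succ) Finset.univ)
    (i j : Fin k) (hij : i < j)
    (hje : vv j.succ ∈ ee ⟨0, hk⟩ ∩ W)
    (hmeet : ((ee i ∩ ee j) \ W).Nonempty) :
    ∀ h ∈ E, vv i.succ ∈ h → ∃ l, ee l = h := by
  have hA : (i : ℕ) < (j : ℕ) := hij
  have hB : (j : ℕ) < k := j.2
  obtain ⟨u, hu⟩ := hmeet
  have hui : u ∈ ee i := (Finset.mem_inter.mp (Finset.mem_sdiff.mp hu).1).1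
  have huj : u ∈ ee j := (Finset.mem_inter.mp (Finset.mem_sdiff.mp hu).1).2
  have hunW : u ∉ W := (Finset.mem_sdiff.mp hu).2
  have hvinj : ∀ (m1 m2 : ℕ) (h1 : m1 < k + 1) (h2 : m2 < k + 1),
      vv ⟨m1, h1⟩ = vv ⟨m2, h2⟩ → m1 = m2 := by
    intro m1 m2 h1 h2 h
    simpa using hP.1 h
  have heinj : ∀ (m1 m2 : ℕ) (h1 : m1 < k) (h2 : m2 < k),
      ee ⟨m1, h1⟩ = ee ⟨m2, h2⟩ → m1 = m2 := by
    intro m1 m2 h1 h2 h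
    simpa using hP.2.1 h
  have hWu : ∀ (m : ℕ) (h1 : m < k + 1), 0 < m → vv ⟨m, h1⟩ ≠ u := by
    intro m h1 hm he
    apply hunW
    rw [hW]
    refine Finset.mem_image.mpr ⟨⟨m - 1, by omega⟩, Finset.mem_univ _, ?_⟩
    rw [← he]
    congr 1
    exact Fin.ext (by simp [Fin.val_succ]; omega)
  have hmemc : ∀ (m p : ℕ) (hm : m < k + 1) (hp : p < k), m = p →
      vv ⟨m, hm⟩ ∈ ee ⟨p, hp⟩ := by
    intro m p hm hp he
    have h2 := (hP.2.2.2 ⟨p, hp⟩).1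
    have h3 : (⟨m, hm⟩ : Fin (k + 1)) = (⟨p, hp⟩ : Fin k).castSucc :=
      Fin.ext (by simp [he])
    rw [h3]; exact h2
  have hmems : ∀ (m p : ℕ) (hm : m < k + 1) (hp : p < k), m = p + 1 →
      vv ⟨m, hm⟩ ∈ ee ⟨p, hp⟩ := by
    intro m p hm hp he
    have h2 := (hP.2.2.2 ⟨p, hp⟩).2
    have h3 : (⟨m, hm⟩ : Fin (k + 1)) = (⟨p, hp⟩ : Fin k).succ :=
      Fin.ext (by simp [he])
    rw [h3]; exact h2
  have hjmem : ∀ (m p : ℕ) (hm : m < k + 1) (hp : p < k), m = (j : ℕ) + 1 → p = 0 →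
      vv ⟨m, hm⟩ ∈ ee ⟨p, hp⟩ := by
    intro m p hm hp h1 h2
    have h3 : (⟨m, hm⟩ : Fin (k + 1)) = j.succ := Fin.ext (by simp [h1])
    have h4 : (⟨p, hp⟩ : Fin k) = ⟨0, hk⟩ := Fin.ext h2
    rw [h3, h4]
    exact (Finset.mem_inter.mp hje).1
  have huei : ∀ (p : ℕ) (hp : p < k), p = (i : ℕ) → u ∈ ee ⟨p, hp⟩ := by
    intro p hp h1
    have h4 : (⟨p, hp⟩ : Fin k) = i := Fin.ext h1
    rw [h4]; exact hui
  have huej : ∀ (p : ℕ) (hp : p < k), p = (j : ℕ) → u ∈ ee ⟨p, hp⟩ := by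
    intro p hp h1
    have h4 : (⟨p, hp⟩ : Fin k) = j := Fin.ext h1
    rw [h4]; exact huj
  have main : ∃ (w : Fin (k + 1) → V) (f : Fin k → Finset V),
      IsBergePath E k w f ∧ w (Fin.last k) = vv i.succ ∧ ∀ l, ∃ m, f l = ee m := by
    refine ⟨fun t =>
      if (t : ℕ) ≤ k - ((j : ℕ) + 1) then vv ⟨k - (t : ℕ), by omega⟩
      else if (t : ℕ) < k - ((j : ℕ) + 1) + ((i : ℕ) + 1) then
        vv ⟨(t : ℕ) - (k - ((j : ℕ) + 1)), by have := t.2; omega⟩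
      else if (t : ℕ) = k - ((j : ℕ) + 1) + ((i : ℕ) + 1) then u
      else vv ⟨(j : ℕ) - ((t : ℕ) - (k - ((j : ℕ) + 1) + ((i : ℕ) + 1) + 1)), by omega⟩,
      fun t =>
      if (t : ℕ) < k - ((j : ℕ) + 1) then ee ⟨k - 1 - (t : ℕ), by omega⟩
      else if (t : ℕ) < k - ((j : ℕ) + 1) + ((i : ℕ) + 1) then
        ee ⟨(t : ℕ) - (k - ((j : ℕ) + 1)), by have := t.2; omega⟩
      else ee ⟨(j : ℕ) - ((t : ℕ) - (k - ((j : ℕ) + 1) + ((i : ℕ) + 1))), by omega⟩,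
      ⟨?_, ?_, ?_, ?_⟩, ?_, ?_⟩
    · intro s t h
      have hs2 := s.2
      have ht2 := t.2
      simp only [] at h
      split_ifs at h
      all_goals first
        | (exact absurd h (hWu _ _ (by omega)))
        | (exact absurd h.symm (hWu _ _ (by omega)))
        | (exact Fin.ext (by omega))
        | (have := hvinj _ _ _ _ h; exact Fin.ext (by omega))
    · intro s t h
      have hs2 := s.2
      have ht2 := t.2
      simp only [] at h
      split_ifs at h
      all_goals first
        | (exact Fin.ext (by omega))
        | (have := heinj _ _ _ _ h; exact Fin.ext (by omega))
    · intro t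
      simp only []
      split_ifs <;> exact hP.2.2.1 _
    · intro t
      have ht2 := t.2
      refine ⟨?_, ?_⟩ <;>
      · simp only [Fin.coe_castSucc, Fin.val_succ]
        split_ifs
        all_goals first
          | (exfalso; omega)
          | (exact hjmem _ _ _ _ (by omega) (by omega))
          | (exact huei _ _ (by omega))
          | (exact huej _ _ (by omega))
          | (exact hmemc _ _ _ _ (by omega))
          | (exact hmems _ _ _ _ (by omega))
    · simp only [Fin.val_last]
      split_ifs
      all_goals first
        | (exfalso; omega)
        | (congr 1; exact Fin.ext (by simp only [Fin.val_succ]; omega))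
    · intro l
      simp only []
      split_ifs <;> exact ⟨_, rfl⟩
  obtain ⟨w, f, hQ, hlast, hf⟩ := main
  intro h hh hih
  obtain ⟨l, hl⟩ := hterm w f hQ h hh (Or.inr (by rw [hlast]; exact hih))
  obtain ⟨m, hm⟩ := hf l
  exact ⟨m, by rw [← hm, hl]⟩
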